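/- Let Q_t, Q_0, G: A → ℝ on a finite action set A with |G(a) - Q_t(a)| ≤ δ for all a. Fix α ∈ [0,1], let ã = argmax_a [αQ_0(a) + (1-α)G(a)] and a_g = argmax_a Q_0(a). Define ζ = (Q_0(ã) + G(ã)) - (Q_0(a_g) + G(a_g)). If ã ≠ a_g and 2δ ≤ ζ, then Q_t(ã) ≥ Q_t(a_g). -/
import Mathlib

/-- If PA-MCTS and the greedy policy under stale Q-values choose different
actions and `2 δ ≤ ζ`, the PA-MCTS action has true value at least that of the
greedy action. -/
theorem pamcts_better_than_greedy
    {A : Type*} [Fintype A]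
    (Qt Q0 G : A → ℝ) (δ α : ℝ) (hδ0 : 0 ≤ δ)
    (hδ : ∀ a, |G a - Qt a| ≤ δ)
    (hα0 : 0 ≤ α) (hα1 : α ≤ 1)
    (atilde ag : A)
    (htilde : ∀ a, α * Q0 a + (1 - α) * G a ≤ α * Q0 atilde + (1 - α) * G atilde)
    (hg : ∀ a, Q0 a ≤ Q0 ag)
    (hne : atilde ≠ ag)
    (hζ : 2 * δ ≤ (Q0 atilde + G atilde) - (Q0 ag + G ag)) :
    Qt atilde ≥ Qt ag := by
  have h1 := abs_le.mp (hδ atilde)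
  have h2 := abs_le.mp (hδ ag)
  have h3 := hg atilde
  linarith [h1.1, h1.2, h2.1, h2.2]
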